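/- A finite family F of integer intervals is irredundant if and only if every interval s ⊆ ⋃F contains a point x such that at most one member of F|s contains x. -/

import Mathlib

open scoped Classical

/-- A finite family of sets is irredundant if its members can be arranged in a
sequence such that each set contains a point not in any of the preceding sets. -/
def Irredundant (F : Finset (Set ℤ)) : Prop :=
  ∃ l : List (Set ℤ), l.Nodup ∧ l.toFinset = F ∧
    ∀ i : Fin l.length, ∃ x ∈ l.get i, ∀ j : Fin l.length, j < i → x ∉ l.get j

/-- An interval is a nonempty half-open integer interval `[a,b)`. -/
def IsItv (s : Set ℤ) : Prop := ∃ a b : ℤ, a < b ∧ s = Set.Ico a b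

/-- `F|s`: the members of `F` contained in `s`. -/
noncomputable def Res (F : Finset (Set ℤ)) (s : Set ℤ) : Finset (Set ℤ) :=
  F.filter (fun f => f ⊆ s)

/-- `N_x F`: the number of members of `F` containing `x`. -/
noncomputable def Nx (F : Finset (Set ℤ)) (x : ℤ) : ℕ :=
  (F.filter (fun f => x ∈ f)).card

/-- `F` is irredundant iff every interval `s ⊆ ⋃ F` contains a point `x` with
`N_x (F|s) ≤ 1`. -/
lemma exists_private (F : Finset (Set ℤ)) (hF : ∀ f ∈ F, IsItv f) (hne : F.Nonempty)
    (h : ∀ s : Set ℤ, IsItv s → s ⊆ ⋃₀ (↑F : Set (Set ℤ)) →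
        ∃ x ∈ s, Nx (Res F s) x ≤ 1) :
    ∃ f ∈ F, ∃ x ∈ f, ∀ g ∈ F, x ∈ g → g = f := by
  set U : Set ℤ := ⋃₀ (↑F : Set (Set ℤ)) with hU
  -- a point p ∈ U
  obtain ⟨f₀, hf₀⟩ := hne
  obtain ⟨a₀, b₀, hab₀, hf₀eq⟩ := hF f₀ hf₀
  have hpU : a₀ ∈ U := ⟨f₀, hf₀, by rw [hf₀eq]; exact ⟨le_refl _, hab₀⟩⟩
  set p := a₀
  -- U is finite hence bounded
  have hUfin : U.Finite := Set.Finite.sUnion F.finite_toSet (fun t ht => by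
    obtain ⟨a, b, _, rfl⟩ := hF t ht; exact Set.finite_Ico a b)
  obtain ⟨m, hm⟩ := hUfin.bddBelow
  obtain ⟨M, hM⟩ := hUfin.bddAbove
  -- least a with Icc a p ⊆ U
  obtain ⟨a, ⟨hap, haU⟩, hamin⟩ := Int.exists_least_of_bdd
    (P := fun a => a ≤ p ∧ Set.Icc a p ⊆ U)
    ⟨m, fun z hz => hm (hz.2 ⟨le_refl z, hz.1⟩)⟩
    ⟨p, le_refl p, by intro y hy; have : y = p := le_antisymm hy.2 hy.1; rwa [this]⟩
  -- greatest b' with Icc p b' ⊆ U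
  obtain ⟨b', ⟨hpb, hbU⟩, hbmax⟩ := Int.exists_greatest_of_bdd
    (P := fun b => p ≤ b ∧ Set.Icc p b ⊆ U)
    ⟨M, fun z hz => hM (hz.2 ⟨hz.1, le_refl z⟩)⟩
    ⟨p, le_refl p, by intro y hy; have : y = p := le_antisymm hy.2 hy.1; rwa [this]⟩
  set s : Set ℤ := Set.Ico a (b' + 1) with hs
  have hsU : s ⊆ U := by
    intro y hy
    have hy' : a ≤ y ∧ y < b' + 1 := hy
    rcases le_or_gt y p with h1 | h1
    · exact haU ⟨hy'.1, h1⟩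
    · exact hbU ⟨h1.le, by omega⟩
  have haout : (a - 1) ∉ U := by
    intro hmem
    have : a ≤ a - 1 := hamin (a - 1) ⟨by omega, by
      intro y hy
      rcases eq_or_lt_of_le hy.1 with h1 | h1
      · rwa [← h1]
      · exact haU ⟨by omega, hy.2⟩⟩
    omega
  have hbout : (b' + 1) ∉ U := by
    intro hmem
    have : b' + 1 ≤ b' := hbmax (b' + 1) ⟨by omega, by
      intro y hy
      rcases eq_or_lt_of_le hy.2 with h1 | h1
      · rwa [h1]
      · exact hbU ⟨hy.1, by omega⟩⟩
    omega
  have key : ∀ g ∈ F, (∃ y, y ∈ g ∧ y ∈ s) → g ⊆ s := by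
    intro g hg ⟨y, hyg, hys⟩
    obtain ⟨c, d, hcd, rfl⟩ := hF g hg
    have hy1 : c ≤ y ∧ y < d := hyg
    have hy2 : a ≤ y ∧ y < b' + 1 := hys
    have hac : a ≤ c := by
      by_contra hlt
      exact haout ⟨Set.Ico c d, hg, by constructor <;> omega⟩
    have hdb : d ≤ b' + 1 := by
      by_contra hlt
      exact hbout ⟨Set.Ico c d, hg, by constructor <;> omega⟩
    intro z hz
    have hz' : c ≤ z ∧ z < d := hz
    exact ⟨by omega, by omega⟩
  obtain ⟨x, hxs, hN⟩ := h s ⟨a, b' + 1, by omega, rfl⟩ hsU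
  obtain ⟨f, hfF', hxf⟩ := hsU hxs
  have hfF : f ∈ F := hfF'
  refine ⟨f, hfF, x, hxf, ?_⟩
  intro g hgF hxg
  have hgs : g ⊆ s := key g hgF ⟨x, hxg, hxs⟩
  have hfs : f ⊆ s := key f hfF ⟨x, hxf, hxs⟩
  have hmemg : g ∈ (Res F s).filter (fun f => x ∈ f) := by
    simp [Res, Finset.mem_filter, hgF, hgs, hxg]
  have hmemf : f ∈ (Res F s).filter (fun f => x ∈ f) := by
    simp [Res, Finset.mem_filter, hfF, hfs, hxf]
  exact Finset.card_le_one.mp hN g hmemg f hmemf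

private lemma mp_dir (F : Finset (Set ℤ)) (h : Irredundant F) :
    ∀ s : Set ℤ, IsItv s → s ⊆ ⋃₀ (↑F : Set (Set ℤ)) →
      ∃ x ∈ s, Nx (Res F s) x ≤ 1 := by
  obtain ⟨l, hnd, hlF, hwit⟩ := h
  intro s hs hsub
  by_contra hcon
  push_neg at hcon
  obtain ⟨a, b, hab, rfl⟩ := hs
  -- s is nonempty
  have hane : a ∈ Set.Ico a b := ⟨le_refl a, hab⟩
  -- G = Res F s is nonempty
  have hG : ∀ x ∈ Set.Ico a b, 2 ≤ ((Res F (Set.Ico a b)).filter (fun f => x ∈ f)).card := by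
    intro x hx
    have := hcon x hx
    simp [Nx] at this; omega
  -- indices of elements of G in l
  set I : Finset (Fin l.length) :=
    Finset.univ.filter (fun i => l.get i ∈ Res F (Set.Ico a b)) with hI
  have hIne : I.Nonempty := by
    have h2 := hG a hane
    have : ((Res F (Set.Ico a b)).filter (fun f => a ∈ f)).Nonempty := by
      rw [← Finset.card_pos]; omega
    obtain ⟨g, hg⟩ := this
    have hgG : g ∈ Res F (Set.Ico a b) := (Finset.mem_filter.mp hg).1
    have hgF : g ∈ F := (Finset.mem_filter.mp hgG).1
    have hgl : g ∈ l := by rw [← List.mem_toFinset, hlF]; exact hgF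
    obtain ⟨i, hi⟩ := List.mem_iff_get.mp hgl
    simp only [List.get_eq_getElem] at hi
    exact ⟨i, by simp [hI, List.get_eq_getElem, hi, hgG]⟩
  set i := I.max' hIne with hidef
  have hiG : l.get i ∈ Res F (Set.Ico a b) := by
    have := I.max'_mem hIne
    rw [← hidef] at this
    simpa [hI] using this
  have hisub : l.get i ⊆ Set.Ico a b := (Finset.mem_filter.mp hiG).2
  obtain ⟨x, hxi, hxj⟩ := hwit i
  have hxs : x ∈ Set.Ico a b := hisub hxi
  -- two members of G contain x
  have h2 := hG x hxs
  have : ∃ g ∈ (Res F (Set.Ico a b)).filter (fun f => x ∈ f), g ≠ l.get i := by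
    by_contra hcc
    push_neg at hcc
    have : ((Res F (Set.Ico a b)).filter (fun f => x ∈ f)).card ≤ 1 :=
      Finset.card_le_one.mpr (fun u hu v hv => by rw [hcc u hu, hcc v hv])
    omega
  obtain ⟨g, hg, hgne⟩ := this
  have hgG : g ∈ Res F (Set.Ico a b) := (Finset.mem_filter.mp hg).1
  have hxg : x ∈ g := by
    have := (Finset.mem_filter.mp hg).2
    simpa using this
  have hgF : g ∈ F := (Finset.mem_filter.mp hgG).1
  have hgl : g ∈ l := by rw [← List.mem_toFinset, hlF]; exact hgF
  obtain ⟨j, hj⟩ := List.mem_iff_get.mp hgl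
  have hj2 := hj
  simp only [List.get_eq_getElem] at hj2
  have hjI : j ∈ I := by simp [hI, List.get_eq_getElem, hj2, hgG]
  have hji : j < i := by
    rcases lt_or_eq_of_le (I.le_max' j hjI) with h1 | h1
    · exact h1
    · exact absurd (by rw [← hj, h1, ← hidef]) hgne
  exact hxj j hji (hj ▸ hxg)

private lemma mpr_dir : ∀ (F : Finset (Set ℤ)), (∀ f ∈ F, IsItv f) →
    (∀ s : Set ℤ, IsItv s → s ⊆ ⋃₀ (↑F : Set (Set ℤ)) →
      ∃ x ∈ s, Nx (Res F s) x ≤ 1) → Irredundant F := by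
  intro F
  induction F using Finset.strongInduction with
  | _ F ih =>
    intro hF h
    rcases Finset.eq_empty_or_nonempty F with rfl | hne
    · exact ⟨[], List.nodup_nil, by simp, fun i => absurd i.isLt (by simp)⟩
    obtain ⟨f, hfF, x, hxf, hpriv⟩ := exists_private F hF hne h
    set F' := F.erase f with hF'
    have hsubset : F' ⊂ F := Finset.erase_ssubset hfF
    have hF'F : F' ⊆ F := hsubset.subset
    have hF'itv : ∀ g ∈ F', IsItv g := fun g hg => hF g (hF'F hg)
    have hh' : ∀ s : Set ℤ, IsItv s → s ⊆ ⋃₀ (↑F' : Set (Set ℤ)) →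
        ∃ x ∈ s, Nx (Res F' s) x ≤ 1 := by
      intro s hs hsub
      have hsub2 : s ⊆ ⋃₀ (↑F : Set (Set ℤ)) :=
        hsub.trans (Set.sUnion_subset_sUnion (by exact_mod_cast hF'F))
      obtain ⟨y, hy, hN⟩ := h s hs hsub2
      refine ⟨y, hy, le_trans (Finset.card_le_card ?_) hN⟩
      intro g hg
      simp only [Res, Finset.mem_filter] at hg ⊢
      exact ⟨⟨hF'F hg.1.1, hg.1.2⟩, hg.2⟩
    obtain ⟨l', hnd', hlF', hwit'⟩ := ih F' hsubset hF'itv hh'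
    have hfnl : f ∉ l' := by
      rw [← List.mem_toFinset, hlF']
      simp [hF']
    refine ⟨l' ++ [f], ?_, ?_, ?_⟩
    · simp [List.nodup_append, hnd', hfnl]
      exact fun a ha h => hfnl (by rw [← h]; exact ha)
    · rw [List.toFinset_append, hlF']
      simp only [List.toFinset_cons, List.toFinset_nil, LawfulSingleton.insert_empty_eq, hF']
      rw [Finset.union_comm, ← Finset.insert_eq, Finset.insert_erase hfF]
    · intro i
      have hlen : (l' ++ [f]).length = l'.length + 1 := by simp
      by_cases hi : (i : ℕ) < l'.length
      · obtain ⟨y, hy, hyj⟩ := hwit' ⟨i, hi⟩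
        have hgi : (l' ++ [f]).get i = l'.get ⟨i, hi⟩ := by
          simp [List.get_eq_getElem, List.getElem_append, hi]
        refine ⟨y, by rw [hgi]; exact hy, ?_⟩
        intro j hji
        have hj : (j : ℕ) < l'.length := by
          have h1 : (j : ℕ) < (i : ℕ) := hji
          omega
        have hgj : (l' ++ [f]).get j = l'.get ⟨j, hj⟩ := by
          simp [List.get_eq_getElem, List.getElem_append, hj]
        rw [hgj]
        exact hyj ⟨j, hj⟩ hji
      · have hieq : (i : ℕ) = l'.length := by
          have h1 : (i : ℕ) < l'.length + 1 := by simpa using i.isLt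
          omega
        have hgi : (l' ++ [f]).get i = f := by
          simp [List.get_eq_getElem, hieq]
        refine ⟨x, by rw [hgi]; exact hxf, ?_⟩
        intro j hji hxj
        have hj : (j : ℕ) < l'.length := by
          have : (j : ℕ) < (i : ℕ) := hji
          omega
        have hgj : (l' ++ [f]).get j = l'.get ⟨j, hj⟩ := by
          simp [List.get_eq_getElem, List.getElem_append, hj]
        set g := l'.get ⟨j, hj⟩ with hgdef
        have hgF' : g ∈ F' := by
          rw [← hlF']
          exact List.mem_toFinset.mpr (l'.get_mem _)
        have : g = f := hpriv g (hF'F hgF') (by rwa [hgj] at hxj)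
        rw [this] at hgF'
        exact (Finset.notMem_erase f F) hgF'

/-- `F` is irredundant iff every interval `s ⊆ ⋃ F` contains a point `x` with
`N_x (F|s) ≤ 1`. -/
theorem irredundant_iff_every_subinterval_good (F : Finset (Set ℤ))
    (hF : ∀ f ∈ F, IsItv f) :
    Irredundant F ↔
      ∀ s : Set ℤ, IsItv s → s ⊆ ⋃₀ (↑F : Set (Set ℤ)) →
        ∃ x ∈ s, Nx (Res F s) x ≤ 1 := by
  exact ⟨mp_dir F, mpr_dir F hF⟩
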